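/- Let K be an algebraically closed field of characteristic 2 and let R = K[u, v, μ₁, ν₁, π₁, μ₂, ν₂, π₂, μ₃, ν₃, π₃] be the polynomial ring in 11 variables over K. Let SL₂(K) act on R by K-algebra automorphisms, where σ = (a b; c d) ∈ SL₂(K) acts on the variables by σ·u = a²u + c²v, σ·v = b²u + d²v, and for i = 1, 2, 3: σ·μ_i = d²μ_i + b²ν_i + bd·π_i, σ·ν_i = c²μ_i + a²ν_i + ac·π_i, σ·π_i = π_i. Then π₁, π₂, π₃ are SL₂(K)-invariant, but π₁, π₂, π₃ is not a regular sequence in the invariant ring R^{SL₂(K)}. -/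

import Mathlib

open MvPolynomial

/-- A sequence `f 0, …, f (r-1)` of elements of a commutative ring is a regular sequence:
the ideal it generates is proper, and for each `i` the image of `f i` is a non-zero-divisor
modulo the ideal generated by the previous elements. -/
def IsRegSeq {S : Type*} [CommRing S] {r : ℕ} (f : Fin r → S) : Prop :=
  Ideal.span (Set.range f) ≠ ⊤ ∧
    ∀ (i : Fin r) (g : S),
      g * f i ∈ Ideal.span (f '' {j : Fin r | j < i}) →
        g ∈ Ideal.span (f '' {j : Fin r | j < i})

/-- The subalgebra of elements fixed by a family of `K`-algebra automorphisms. -/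
def fixedPointsSubalgebra {K R : Type*} [CommSemiring K] [CommSemiring R] [Algebra K R]
    {ι : Sort*} (ρ : ι → (R ≃ₐ[K] R)) : Subalgebra K R where
  carrier := {r | ∀ i, ρ i r = r}
  mul_mem' := fun ha hb i => by rw [map_mul, ha i, hb i]
  one_mem' := fun i => map_one (ρ i)
  add_mem' := fun ha hb i => by rw [map_add, ha i, hb i]
  zero_mem' := fun i => map_zero (ρ i)
  algebraMap_mem' := fun k i => (ρ i).commutes k

theorem mem_fixedPointsSubalgebra {K R : Type*} [CommSemiring K] [CommSemiring R] [Algebra K R]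
    {ι : Sort*} (ρ : ι → (R ≃ₐ[K] R)) (x : R) :
    x ∈ fixedPointsSubalgebra ρ ↔ ∀ i, ρ i x = x := Iff.rfl

/- ### Auxiliary lemmas -/

lemma two_eq_zero' {K : Type*} [Field K] [CharP K 2] :
    (2 : MvPolynomial (Fin 11) K) = 0 := by
  have := CharP.cast_eq_zero (MvPolynomial (Fin 11) K) 2
  simpa using this

lemma prime_X_mv {K : Type*} [Field K] (k : Fin 11) :
    Prime (X k : MvPolynomial (Fin 11) K) := by
  let e : MvPolynomial (Fin 11) K ≃ₐ[K] Polynomial (MvPolynomial (Fin 10) K) :=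
    (renameEquiv K (Equiv.swap k 0)).trans (finSuccEquiv K 10)
  have he : e (X k) = Polynomial.X := by
    show (finSuccEquiv K 10) ((renameEquiv K (Equiv.swap k 0)) (X k)) = _
    rw [renameEquiv_apply, rename_X, Equiv.swap_apply_left]
    exact MvPolynomial.finSuccEquiv_X_zero
  rw [← MulEquiv.prime_iff e.toMulEquiv]
  rw [show e.toMulEquiv (X k) = e (X k) from rfl, he]
  exact Polynomial.prime_X

lemma inv_g {K : Type*} [Field K] [CharP K 2]
    (φ : MvPolynomial (Fin 11) K ≃ₐ[K] MvPolynomial (Fin 11) K)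
    (a b c d : K) (hdet : a * d - b * c = 1)
    (m n p m' n' p' : Fin 11)
    (h0 : φ (X 0) = C (a^2) * X 0 + C (c^2) * X 1)
    (h1 : φ (X 1) = C (b^2) * X 0 + C (d^2) * X 1)
    (hm : φ (X m) = C (d^2) * X m + C (b^2) * X n + C (b*d) * X p)
    (hn : φ (X n) = C (c^2) * X m + C (a^2) * X n + C (a*c) * X p)
    (hp : φ (X p) = X p)
    (hm' : φ (X m') = C (d^2) * X m' + C (b^2) * X n' + C (b*d) * X p')
    (hn' : φ (X n') = C (c^2) * X m' + C (a^2) * X n' + C (a*c) * X p')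
    (hp' : φ (X p') = X p') :
    φ ((X 0 * X m + X 1 * X n) * X p' + (X 0 * X m' + X 1 * X n') * X p)
      = (X 0 * X m + X 1 * X n) * X p' + (X 0 * X m' + X 1 * X n') * X p := by
  have h2 : (2 : MvPolynomial (Fin 11) K) = 0 := two_eq_zero'
  have hd : (C a * C d - C b * C c : MvPolynomial (Fin 11) K) = 1 := by
    rw [← map_mul, ← map_mul, ← map_sub, hdet, map_one]
  simp only [map_add, map_mul, h0, h1, hm, hn, hp, hm', hn', hp', map_pow]
  linear_combination
    ((2 + (C a * C d - C b * C c - 1)) *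
        (X 0 * X m * X p' + X 1 * X n * X p' + X 0 * X m' * X p + X 1 * X n' * X p)
      + 2 * C a * C b * X 0 * X p * X p' + 2 * C c * C d * X 1 * X p * X p') * hd
    + ((C a * C d) * (C b * C c) *
        (X 0 * X m * X p' + X 1 * X n * X p' + X 0 * X m' * X p + X 1 * X n' * X p)
      + (C a)^2 * (C b)^2 * (X 0 * X n * X p' + X 0 * X n' * X p)
      + (C c)^2 * (C d)^2 * (X 1 * X m * X p' + X 1 * X m' * X p)
      + 2 * C a * C b * (C b * C c) * X 0 * X p * X p'
      + 2 * C c * C d * (C b * C c) * X 1 * X p * X p'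
      + C a * C b * X 0 * X p * X p' + C c * C d * X 1 * X p * X p') * h2

/-- The unipotent matrix `!![1, t; 0, 1]` as an element of `SL₂(K)`. -/
noncomputable def slt {K : Type*} [Field K] (t : K) : Matrix.SpecialLinearGroup (Fin 2) K :=
  ⟨!![1, t; 0, 1], by simp [Matrix.det_fin_two_of]⟩

lemma slt00 {K : Type*} [Field K] (t : K) : (slt t) 0 0 = 1 := rfl
lemma slt01 {K : Type*} [Field K] (t : K) : (slt t) 0 1 = t := rfl
lemma slt10 {K : Type*} [Field K] (t : K) : (slt t) 1 0 = 0 := rfl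
lemma slt11 {K : Type*} [Field K] (t : K) : (slt t) 1 1 = 1 := rfl

theorem stmt14 {K : Type*} [Field K] [IsAlgClosed K] [CharP K 2]
    (ρ : Matrix.SpecialLinearGroup (Fin 2) K →*
      (MvPolynomial (Fin 11) K ≃ₐ[K] MvPolynomial (Fin 11) K))
    (h_u : ∀ σ : Matrix.SpecialLinearGroup (Fin 2) K,
      ρ σ (X 0) = C (σ 0 0 ^ 2) * X 0 + C (σ 1 0 ^ 2) * X 1)
    (h_v : ∀ σ : Matrix.SpecialLinearGroup (Fin 2) K,
      ρ σ (X 1) = C (σ 0 1 ^ 2) * X 0 + C (σ 1 1 ^ 2) * X 1)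
    (h_μ1 : ∀ σ : Matrix.SpecialLinearGroup (Fin 2) K,
      ρ σ (X 2) = C (σ 1 1 ^ 2) * X 2 + C (σ 0 1 ^ 2) * X 3 + C (σ 0 1 * σ 1 1) * X 4)
    (h_ν1 : ∀ σ : Matrix.SpecialLinearGroup (Fin 2) K,
      ρ σ (X 3) = C (σ 1 0 ^ 2) * X 2 + C (σ 0 0 ^ 2) * X 3 + C (σ 0 0 * σ 1 0) * X 4)
    (h_π1 : ∀ σ : Matrix.SpecialLinearGroup (Fin 2) K, ρ σ (X 4) = X 4)
    (h_μ2 : ∀ σ : Matrix.SpecialLinearGroup (Fin 2) K,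
      ρ σ (X 5) = C (σ 1 1 ^ 2) * X 5 + C (σ 0 1 ^ 2) * X 6 + C (σ 0 1 * σ 1 1) * X 7)
    (h_ν2 : ∀ σ : Matrix.SpecialLinearGroup (Fin 2) K,
      ρ σ (X 6) = C (σ 1 0 ^ 2) * X 5 + C (σ 0 0 ^ 2) * X 6 + C (σ 0 0 * σ 1 0) * X 7)
    (h_π2 : ∀ σ : Matrix.SpecialLinearGroup (Fin 2) K, ρ σ (X 7) = X 7)
    (h_μ3 : ∀ σ : Matrix.SpecialLinearGroup (Fin 2) K,
      ρ σ (X 8) = C (σ 1 1 ^ 2) * X 8 + C (σ 0 1 ^ 2) * X 9 + C (σ 0 1 * σ 1 1) * X 10)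
    (h_ν3 : ∀ σ : Matrix.SpecialLinearGroup (Fin 2) K,
      ρ σ (X 9) = C (σ 1 0 ^ 2) * X 8 + C (σ 0 0 ^ 2) * X 9 + C (σ 0 0 * σ 1 0) * X 10)
    (h_π3 : ∀ σ : Matrix.SpecialLinearGroup (Fin 2) K, ρ σ (X 10) = X 10) :
    (∀ σ : Matrix.SpecialLinearGroup (Fin 2) K,
      ρ σ (X 4) = X 4 ∧ ρ σ (X 7) = X 7 ∧ ρ σ (X 10) = X 10) ∧
    ¬ IsRegSeq
      (![⟨X 4, (mem_fixedPointsSubalgebra _ _).mpr h_π1⟩,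
          ⟨X 7, (mem_fixedPointsSubalgebra _ _).mpr h_π2⟩,
          ⟨X 10, (mem_fixedPointsSubalgebra _ _).mpr h_π3⟩] :
        Fin 3 → fixedPointsSubalgebra
          (fun σ : Matrix.SpecialLinearGroup (Fin 2) K => ρ σ)) := by
  classical
  refine ⟨fun σ => ⟨h_π1 σ, h_π2 σ, h_π3 σ⟩, ?_⟩
  rintro ⟨-, hreg⟩
  have h2 : (2 : MvPolynomial (Fin 11) K) = 0 := two_eq_zero'
  have hdet : ∀ σ : Matrix.SpecialLinearGroup (Fin 2) K,
      σ 0 0 * σ 1 1 - σ 0 1 * σ 1 0 = 1 := fun σ => by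
    rw [← Matrix.det_fin_two]; exact σ.prop
  have hg12 : ∀ σ, ρ σ ((X 0 * X 2 + X 1 * X 3) * X 7 + (X 0 * X 5 + X 1 * X 6) * X 4)
      = (X 0 * X 2 + X 1 * X 3) * X 7 + (X 0 * X 5 + X 1 * X 6) * X 4 := fun σ =>
    inv_g (ρ σ) _ _ _ _ (hdet σ) 2 3 4 5 6 7 (h_u σ) (h_v σ) (h_μ1 σ) (h_ν1 σ) (h_π1 σ)
      (h_μ2 σ) (h_ν2 σ) (h_π2 σ)
  have hg13 : ∀ σ, ρ σ ((X 0 * X 2 + X 1 * X 3) * X 10 + (X 0 * X 8 + X 1 * X 9) * X 4)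
      = (X 0 * X 2 + X 1 * X 3) * X 10 + (X 0 * X 8 + X 1 * X 9) * X 4 := fun σ =>
    inv_g (ρ σ) _ _ _ _ (hdet σ) 2 3 4 8 9 10 (h_u σ) (h_v σ) (h_μ1 σ) (h_ν1 σ) (h_π1 σ)
      (h_μ3 σ) (h_ν3 σ) (h_π3 σ)
  have hg23 : ∀ σ, ρ σ ((X 0 * X 5 + X 1 * X 6) * X 10 + (X 0 * X 8 + X 1 * X 9) * X 7)
      = (X 0 * X 5 + X 1 * X 6) * X 10 + (X 0 * X 8 + X 1 * X 9) * X 7 := fun σ =>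
    inv_g (ρ σ) _ _ _ _ (hdet σ) 5 6 7 8 9 10 (h_u σ) (h_v σ) (h_μ2 σ) (h_ν2 σ) (h_π2 σ)
      (h_μ3 σ) (h_ν3 σ) (h_π3 σ)
  set S := fixedPointsSubalgebra (fun σ : Matrix.SpecialLinearGroup (Fin 2) K => ρ σ) with hSdef
  set F : Fin 3 → S :=
    ![⟨X 4, (mem_fixedPointsSubalgebra _ _).mpr h_π1⟩,
      ⟨X 7, (mem_fixedPointsSubalgebra _ _).mpr h_π2⟩,
      ⟨X 10, (mem_fixedPointsSubalgebra _ _).mpr h_π3⟩] with hFdef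
  have hF0 : (F 0 : MvPolynomial (Fin 11) K) = X 4 := rfl
  have hF1 : (F 1 : MvPolynomial (Fin 11) K) = X 7 := rfl
  have hF2 : (F 2 : MvPolynomial (Fin 11) K) = X 10 := rfl
  have himg : (F '' {j : Fin 3 | j < 2}) = {F 0, F 1} := by
    have : ({j : Fin 3 | j < 2} : Set (Fin 3)) = {0, 1} := by
      ext j; fin_cases j <;> simp
    rw [this, Set.image_insert_eq, Set.image_singleton]
  set gS : S := ⟨_, (mem_fixedPointsSubalgebra _ _).mpr hg12⟩ with hgSdef
  have hmem : gS * F 2 ∈ Ideal.span ({F 0, F 1} : Set S) := by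
    refine Ideal.mem_span_pair.mpr
      ⟨⟨_, (mem_fixedPointsSubalgebra _ _).mpr hg23⟩,
       ⟨_, (mem_fixedPointsSubalgebra _ _).mpr hg13⟩, ?_⟩
    apply Subtype.ext
    show ((X 0 * X 5 + X 1 * X 6) * X 10 + (X 0 * X 8 + X 1 * X 9) * X 7) * X 4
        + ((X 0 * X 2 + X 1 * X 3) * X 10 + (X 0 * X 8 + X 1 * X 9) * X 4) * X 7
      = ((X 0 * X 2 + X 1 * X 3) * X 7 + (X 0 * X 5 + X 1 * X 6) * X 4) * X 10
    linear_combination ((X 0 * X 8 + X 1 * X 9) * X 4 * X 7) * h2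
  have hspan := hreg 2 gS (by rw [himg]; exact hmem)
  rw [himg] at hspan
  obtain ⟨A, B, hAB⟩ := Ideal.mem_span_pair.mp hspan
  have hABR : (A : MvPolynomial (Fin 11) K) * X 4 + (B : MvPolynomial (Fin 11) K) * X 7
      = (X 0 * X 2 + X 1 * X 3) * X 7 + (X 0 * X 5 + X 1 * X 6) * X 4 :=
    congrArg Subtype.val hAB
  -- divisibility step
  have hdvd1 : (X 7 : MvPolynomial (Fin 11) K)
      ∣ ((A : MvPolynomial (Fin 11) K) - (X 0 * X 5 + X 1 * X 6)) * X 4 :=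
    ⟨(X 0 * X 2 + X 1 * X 3) - (B : MvPolynomial (Fin 11) K), by linear_combination hABR⟩
  have hdvd : (X 7 : MvPolynomial (Fin 11) K)
      ∣ (A : MvPolynomial (Fin 11) K) - (X 0 * X 5 + X 1 * X 6) := by
    rcases (prime_X_mv 7).2.2 _ _ hdvd1 with h | h
    · exact h
    · exact absurd (X_dvd_X.mp h) (by decide)
  obtain ⟨Cp, hCp⟩ := hdvd
  have hA : (A : MvPolynomial (Fin 11) K) = X 0 * X 5 + X 1 * X 6 + X 7 * Cp := by
    linear_combination hCp
  -- the cocycle equation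
  have key : ∀ t : K, ρ (slt t) Cp = Cp - C t * X 0 := by
    intro t
    have hinv := A.2 (slt t)
    rw [hA] at hinv
    have hx0 := h_u (slt t); have hx1 := h_v (slt t)
    have hx5 := h_μ2 (slt t); have hx6 := h_ν2 (slt t); have hx7 := h_π2 (slt t)
    simp only [slt00, slt01, slt10, slt11] at hx0 hx1 hx5 hx6
    simp only [one_pow, mul_one, one_mul, zero_pow, mul_zero, zero_mul, map_one, map_zero,
      zero_add, add_zero, ne_eq, OfNat.ofNat_ne_zero, not_false_eq_true] at hx0 hx1 hx5 hx6
    simp only [map_add, map_mul] at hinv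
    rw [hx0, hx1, hx5, hx6, hx7] at hinv
    have hz : (X 7 : MvPolynomial (Fin 11) K) * (ρ (slt t) Cp - (Cp - C t * X 0)) = 0 := by
      linear_combination hinv - (C (t^2) * X 0 * X 6) * h2
    rcases mul_eq_zero.mp hz with h | h
    · exact absurd h (X_ne_zero 7)
    · exact sub_eq_zero.mp h
  -- evaluation
  have hcomp : ∀ t : K,
      (aeval (fun i : Fin 11 => if i = 0 then (1:K) else if i = 1 then t^2 else 0)) Cp
        = (aeval (fun i : Fin 11 => if i = 0 then (1:K) else 0)) Cp - t := by
    intro t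
    have hx0 := h_u (slt t); have hx1 := h_v (slt t)
    have hx2 := h_μ1 (slt t); have hx3 := h_ν1 (slt t); have hx4 := h_π1 (slt t)
    have hx5 := h_μ2 (slt t); have hx6 := h_ν2 (slt t); have hx7 := h_π2 (slt t)
    have hx8 := h_μ3 (slt t); have hx9 := h_ν3 (slt t); have hx10 := h_π3 (slt t)
    simp only [slt00, slt01, slt10, slt11] at hx0 hx1 hx2 hx3 hx5 hx6 hx8 hx9
    have hhom : ((aeval (fun i : Fin 11 => if i = 0 then (1:K) else 0)).comp
          (ρ (slt t)).toAlgHom : MvPolynomial (Fin 11) K →ₐ[K] K)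
        = aeval (fun i : Fin 11 => if i = 0 then (1:K) else if i = 1 then t^2 else 0) := by
      apply MvPolynomial.algHom_ext
      intro i
      fin_cases i <;>
        simp [hx0, hx1, hx2, hx3, hx4, hx5, hx6, hx7, hx8, hx9, hx10]
    have hkey := congrArg (aeval (fun i : Fin 11 => if i = 0 then (1:K) else 0)) (key t)
    rw [map_sub, map_mul, aeval_C, aeval_X] at hkey
    calc (aeval (fun i : Fin 11 => if i = 0 then (1:K) else if i = 1 then t^2 else 0)) Cp
        = ((aeval (fun i : Fin 11 => if i = 0 then (1:K) else 0)).comp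
            (ρ (slt t)).toAlgHom) Cp := by rw [hhom]
      _ = (aeval (fun i : Fin 11 => if i = 0 then (1:K) else 0)) (ρ (slt t) Cp) := rfl
      _ = (aeval (fun i : Fin 11 => if i = 0 then (1:K) else 0)) Cp - t := by
            rw [hkey]; simp [Algebra.algebraMap_self]
  -- package into a single-variable polynomial
  set c0 : K := (aeval (fun i : Fin 11 => if i = 0 then (1:K) else 0)) Cp with hc0
  set ψ : Polynomial K :=
    (aeval (fun i : Fin 11 =>
      if i = 0 then (1 : Polynomial K) else if i = 1 then Polynomial.X^2 else 0)) Cp with hψdef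
  have hψeval : ∀ t : K, ψ.eval t = c0 - t := by
    intro t
    have hc : ((Polynomial.aeval t).comp
          (aeval (fun i : Fin 11 =>
            if i = 0 then (1 : Polynomial K) else if i = 1 then Polynomial.X^2 else 0))
          : MvPolynomial (Fin 11) K →ₐ[K] K)
        = aeval (fun i : Fin 11 => if i = 0 then (1:K) else if i = 1 then t^2 else 0) := by
      apply MvPolynomial.algHom_ext
      intro i
      simp only [AlgHom.comp_apply, aeval_X]
      split_ifs <;> simp
    have h1 := congrArg (fun φ : MvPolynomial (Fin 11) K →ₐ[K] K => φ Cp) hc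
    simp only [AlgHom.comp_apply] at h1
    have h2' : Polynomial.aeval t ψ = ψ.eval t := by
      simp [Polynomial.aeval_def, Polynomial.eval, Polynomial.eval₂_def]
    rw [hψdef] at h2' ⊢
    rw [← h2', h1, hcomp t]
  have hψ : ψ = Polynomial.C c0 - Polynomial.X :=
    Polynomial.funext fun t => by rw [hψeval t]; simp
  have hcoeff : ψ.coeff 1 = 0 := by
    have hexp : ((Polynomial.expand K 2).comp
          (aeval (fun i : Fin 11 =>
            if i = 0 then (1 : Polynomial K) else if i = 1 then Polynomial.X else 0))
          : MvPolynomial (Fin 11) K →ₐ[K] Polynomial K)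
        = aeval (fun i : Fin 11 =>
            if i = 0 then (1 : Polynomial K) else if i = 1 then Polynomial.X^2 else 0) := by
      apply MvPolynomial.algHom_ext
      intro i
      simp only [AlgHom.comp_apply, aeval_X]
      split_ifs <;> simp [Polynomial.expand_X]
    have h1 := congrArg (fun φ : MvPolynomial (Fin 11) K →ₐ[K] Polynomial K => φ Cp) hexp
    simp only [AlgHom.comp_apply] at h1
    rw [hψdef, ← h1, Polynomial.coeff_expand (by norm_num)]
    norm_num
  rw [hψ] at hcoeff
  simp [Polynomial.coeff_sub, Polynomial.coeff_C, Polynomial.coeff_X_one] at hcoeff
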